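/- Let d ≥ 1, L ≥ 2 be integers, Λ = (ℤ/2Lℤ)^d, N = (2L)^d, ε > 0, δ ≥ 0, J > 0. Let ν be a Borel probability measure on C such that ∫_C exp( t ∫₀¹ ω(τ)² dτ ) ν(dω) < ∞ for every t > 0, and suppose there exists a Borel set B ⊆ C with ν(B) ≥ e^{−δ} and ω(τ) ≥ √ε for every ω ∈ B and all τ ∈ [0,1]. Let Z(J) := ∫_{C^Λ} exp( J · Y_Λ ) dν^{⊗Λ} and μ_J := exp( J · Y_Λ ) ν^{⊗Λ} / Z(J). Then (1/N) Σ_{ℓ∈Λ} ∫_{C^Λ} ( ∫₀¹ ω_ℓ(τ)² dτ ) μ_J(dω_Λ) ≥ ε − δ/J. -/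

import Mathlib

open MeasureTheory ENNReal

set_option maxHeartbeats 1000000

noncomputable section

/-- The space `C` of continuous paths `ω : [0,1] → ℝ` with `ω 0 = ω 1`. -/
abbrev PathSpace : Type := {ω : C(unitInterval, ℝ) // ω 0 = ω 1}

instance : MeasurableSpace PathSpace := borel PathSpace

instance : BorelSpace PathSpace := ⟨rfl⟩

example : SecondCountableTopology PathSpace := by infer_instance
example : CompactSpace unitInterval := by infer_instance
example : LocallyCompactSpace unitInterval := by infer_instance
example : ContinuousMul C(unitInterval, ℝ) := by infer_instance

lemma integrable_cont {h : unitInterval → ℝ} (hc : Continuous h) : Integrable h :=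
  hc.integrable_of_hasCompactSupport (IsClosed.isCompact (isClosed_tsupport _))

lemma lipschitz_int : LipschitzWith 1 (fun f : C(unitInterval, ℝ) => ∫ τ, f τ) := by
  apply LipschitzWith.of_dist_le_mul
  intro f g
  rw [Real.dist_eq, NNReal.coe_one, one_mul,
    ← integral_sub (integrable_cont f.continuous) (integrable_cont g.continuous)]
  calc |∫ τ, (f τ - g τ)| = ‖∫ τ, (f τ - g τ)‖ := (Real.norm_eq_abs _).symm
    _ ≤ dist f g * (volume (Set.univ : Set unitInterval)).toReal := by
        apply norm_integral_le_of_norm_le_const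
        exact Filter.Eventually.of_forall fun τ => by
          simpa [Real.norm_eq_abs, ← Real.dist_eq] using ContinuousMap.dist_apply_le_dist τ
    _ = dist f g := by simp


/-- The discrete torus `Λ = (ℤ/2Lℤ)^d`. -/
abbrev Torus (d L : ℕ) : Type := Fin d → ZMod (2 * L)

/-- Nearest-neighbor relation on the torus: `ℓ - ℓ' = ± e_j` for some coordinate `j`. -/
def isNN {d L : ℕ} (ℓ ℓ' : Torus d L) : Prop :=
  ∃ j : Fin d, ℓ - ℓ' = Pi.single j 1 ∨ ℓ' - ℓ = Pi.single j 1

/-- `Y(ω, ω') = ∫₀¹ ω(τ) ω'(τ) dτ`. -/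
def Ypair (ω ω' : PathSpace) : ℝ := ∫ τ : unitInterval, ω.1 τ * ω'.1 τ

def Xf (ω : PathSpace) : ℝ := ∫ τ : unitInterval, (ω.1 τ) ^ 2

lemma continuous_Xf : Continuous Xf := by
  have h : Xf = (fun f : C(unitInterval, ℝ) => ∫ τ, f τ) ∘ fun ω : PathSpace => ω.1 * ω.1 := by
    funext ω
    simp only [Function.comp_apply, Xf, ContinuousMap.mul_apply, sq]
  rw [h]
  exact lipschitz_int.continuous.comp (continuous_subtype_val.mul continuous_subtype_val)

lemma continuous_Ypair : Continuous fun p : PathSpace × PathSpace => Ypair p.1 p.2 := by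
  have h : (fun p : PathSpace × PathSpace => Ypair p.1 p.2)
      = (fun f : C(unitInterval, ℝ) => ∫ τ, f τ) ∘ fun p : PathSpace × PathSpace => p.1.1 * p.2.1 := by
    funext p
    simp only [Function.comp_apply, Ypair, ContinuousMap.mul_apply]
  rw [h]
  exact lipschitz_int.continuous.comp
    ((continuous_subtype_val.comp continuous_fst).mul (continuous_subtype_val.comp continuous_snd))

lemma Xf_nonneg (ω : PathSpace) : 0 ≤ Xf ω := integral_nonneg fun τ => sq_nonneg _

lemma Ypair_le (ω ω' : PathSpace) : Ypair ω ω' ≤ (Xf ω + Xf ω') / 2 := by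
  have h : Ypair ω ω' ≤ ∫ τ : unitInterval, ((ω.1 τ) ^ 2 + (ω'.1 τ) ^ 2) / 2 := by
    apply integral_mono (integrable_cont (ω.1.continuous.mul ω'.1.continuous))
      (integrable_cont (by continuity))
    intro τ; simp only [Pi.mul_apply]; nlinarith [sq_nonneg (ω.1 τ - ω'.1 τ)]
  calc Ypair ω ω' ≤ _ := h
    _ = (Xf ω + Xf ω') / 2 := by
      rw [Xf, Xf, ← integral_add (integrable_cont (by continuity)) (integrable_cont (by continuity)),
        ← integral_div]

lemma neg_Ypair_le (ω ω' : PathSpace) : -((Xf ω + Xf ω') / 2) ≤ Ypair ω ω' := by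
  have h : (∫ τ : unitInterval, -(((ω.1 τ) ^ 2 + (ω'.1 τ) ^ 2) / 2)) ≤ Ypair ω ω' := by
    apply integral_mono (integrable_cont (by continuity))
      (integrable_cont (ω.1.continuous.mul ω'.1.continuous))
    intro τ; simp only [Pi.mul_apply]; nlinarith [sq_nonneg (ω.1 τ + ω'.1 τ)]
  have e : -((Xf ω + Xf ω') / 2) = ∫ τ : unitInterval, -(((ω.1 τ) ^ 2 + (ω'.1 τ) ^ 2) / 2) := by
    rw [Xf, Xf, ← integral_add (integrable_cont (by continuity)) (integrable_cont (by continuity)),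
      ← integral_div, ← integral_neg]
  rw [e]; exact h

lemma Ypair_ge {ε : ℝ} (hε : 0 < ε) (ω ω' : PathSpace)
    (h : ∀ τ, Real.sqrt ε ≤ ω.1 τ) (h' : ∀ τ, Real.sqrt ε ≤ ω'.1 τ) : ε ≤ Ypair ω ω' := by
  have : (∫ _ : unitInterval, ε) ≤ Ypair ω ω' := by
    apply integral_mono (integrable_const ε) (integrable_cont (ω.1.continuous.mul ω'.1.continuous))
    intro τ
    calc ε = Real.sqrt ε * Real.sqrt ε := (Real.mul_self_sqrt hε.le).symm
      _ ≤ ω.1 τ * ω'.1 τ := mul_le_mul (h τ) (h' τ) (Real.sqrt_nonneg ε)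
        ((Real.sqrt_nonneg ε).trans (h τ))
  simpa using this

lemma isNN_comm {d L : ℕ} (ℓ ℓ' : Torus d L) : isNN ℓ ℓ' ↔ isNN ℓ' ℓ :=
  exists_congr fun _ => or_comm

open Classical in
lemma card_nn {d L : ℕ} (hL : 2 ≤ L) [NeZero (2 * L)] (ℓ : Torus d L) :
    (Finset.univ.filter fun ℓ' => isNN ℓ ℓ').card = 2 * d := by
  haveI : Fact (1 < 2 * L) := ⟨by omega⟩
  have h2 : (2 : ZMod (2 * L)) ≠ 0 := by
    have h2' : ((2 : ℕ) : ZMod (2 * L)) ≠ 0 := by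
      rw [Ne, ZMod.natCast_eq_zero_iff]
      intro hdvd
      have := Nat.le_of_dvd (by norm_num) hdvd
      omega
    simpa using h2'
  have hsing : ∀ j k : Fin d, ((Pi.single j 1 : Torus d L) = Pi.single k 1) → j = k := by
    intro j k h
    by_contra hjk
    have h' := congrFun h j
    rw [Pi.single_eq_same, Pi.single_eq_of_ne (fun hh : j = k => hjk hh)] at h'
    exact one_ne_zero h'
  have hinj1 : Function.Injective fun j : Fin d => ℓ - (Pi.single j 1 : Torus d L) :=
    fun j k h => hsing j k (sub_right_inj.mp h)
  have hinj2 : Function.Injective fun j : Fin d => ℓ + (Pi.single j 1 : Torus d L) :=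
    fun j k h => hsing j k ((add_right_inj ℓ).mp h)
  have hset : (Finset.univ.filter fun ℓ' => isNN ℓ ℓ')
      = (Finset.univ.image fun j : Fin d => ℓ - (Pi.single j 1 : Torus d L))
        ∪ (Finset.univ.image fun j : Fin d => ℓ + (Pi.single j 1 : Torus d L)) := by
    ext ℓ'
    simp only [Finset.mem_filter, Finset.mem_univ, true_and, Finset.mem_union, Finset.mem_image]
    constructor
    · rintro ⟨j, h | h⟩
      · exact Or.inl ⟨j, by rw [← h]; abel⟩
      · exact Or.inr ⟨j, by rw [← h]; abel⟩
    · rintro (⟨j, h⟩ | ⟨j, h⟩)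
      · exact ⟨j, Or.inl (by rw [← h]; abel)⟩
      · exact ⟨j, Or.inr (by rw [← h]; abel)⟩
  have hdisj : Disjoint (Finset.univ.image fun j : Fin d => ℓ - (Pi.single j 1 : Torus d L))
      (Finset.univ.image fun j : Fin d => ℓ + (Pi.single j 1 : Torus d L)) := by
    rw [Finset.disjoint_left]
    rintro x hx1 hx2
    simp only [Finset.mem_image, Finset.mem_univ, true_and] at hx1 hx2
    obtain ⟨j, hj⟩ := hx1
    obtain ⟨k, hk⟩ := hx2
    have hjk : -(Pi.single j 1 : Torus d L) = Pi.single k 1 := by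
      have h3 : ℓ + -(Pi.single j 1 : Torus d L) = ℓ + Pi.single k 1 := by
        rw [← sub_eq_add_neg]; exact hj.trans hk.symm
      exact add_left_cancel h3
    have hjk' := congrFun hjk k
    by_cases hcase : j = k
    · subst hcase
      simp only [Pi.neg_apply, Pi.single_eq_same] at hjk'
      exact h2 (by linear_combination -hjk')
    · simp only [Pi.neg_apply, Pi.single_eq_same,
        Pi.single_eq_of_ne (fun hh : k = j => hcase hh.symm), neg_zero] at hjk'
      exact one_ne_zero hjk'.symm
  rw [hset, Finset.card_union_of_disjoint hdisj, Finset.card_image_of_injective _ hinj1,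
    Finset.card_image_of_injective _ hinj2, Finset.card_univ, Fintype.card_fin]
  ring

open Classical in
lemma sum_ite_const {d L : ℕ} (hL : 2 ≤ L) [NeZero (2 * L)] (ℓ : Torus d L) (c : ℝ) :
    ∑ ℓ' : Torus d L, (if isNN ℓ ℓ' then c else 0) = (2 * (d : ℝ)) * c := by
  rw [← Finset.sum_filter, Finset.sum_const, card_nn hL, nsmul_eq_mul]
  push_cast; ring

open Classical in
lemma sum_pair {d L : ℕ} (hL : 2 ≤ L) [NeZero (2 * L)] (x : Torus d L → ℝ) :
    ∑ ℓ : Torus d L, ∑ ℓ' : Torus d L, (if isNN ℓ ℓ' then (x ℓ + x ℓ') / 2 else 0)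
      = (2 * (d : ℝ)) * ∑ ℓ : Torus d L, x ℓ := by
  have hsplit : ∀ ℓ ℓ' : Torus d L, (if isNN ℓ ℓ' then (x ℓ + x ℓ') / 2 else 0)
      = (if isNN ℓ ℓ' then x ℓ else 0) / 2 + (if isNN ℓ ℓ' then x ℓ' else 0) / 2 := by
    intro ℓ ℓ'; split <;> ring
  simp_rw [hsplit, Finset.sum_add_distrib, ← Finset.sum_div]
  have e1 : ∑ ℓ : Torus d L, ∑ ℓ' : Torus d L, (if isNN ℓ ℓ' then x ℓ else 0)
      = (2 * (d : ℝ)) * ∑ ℓ : Torus d L, x ℓ := by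
    simp_rw [sum_ite_const hL, Finset.mul_sum]
  have e2 : ∑ ℓ : Torus d L, ∑ ℓ' : Torus d L, (if isNN ℓ ℓ' then x ℓ' else 0)
      = (2 * (d : ℝ)) * ∑ ℓ : Torus d L, x ℓ := by
    rw [Finset.sum_comm]
    have : ∀ ℓ' ℓ : Torus d L, (if isNN ℓ ℓ' then x ℓ' else 0) = (if isNN ℓ' ℓ then x ℓ' else 0) :=
      fun ℓ' ℓ => if_congr (isNN_comm ℓ ℓ') rfl rfl
    simp_rw [this, sum_ite_const hL, Finset.mul_sum]
  rw [e1, e2]; ring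


open Classical in
/-- `Y_Λ(ω_Λ) = (1/2) Σ_{ℓ,ℓ' nearest neighbors} Y(ω_ℓ, ω_{ℓ'})`, the sum over ordered pairs. -/
def YLam (d L : ℕ) [NeZero (2 * L)] (ωΛ : Torus d L → PathSpace) : ℝ :=
  (1 / 2) * ∑ ℓ : Torus d L, ∑ ℓ' : Torus d L,
    if isNN ℓ ℓ' then Ypair (ωΛ ℓ) (ωΛ ℓ') else 0

open Classical in
lemma YLam_le {d L : ℕ} (hL : 2 ≤ L) [NeZero (2 * L)] (ωΛ : Torus d L → PathSpace) :
    YLam d L ωΛ ≤ (d : ℝ) * ∑ ℓ : Torus d L, Xf (ωΛ ℓ) := by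
  have h1 : ∑ ℓ : Torus d L, ∑ ℓ' : Torus d L, (if isNN ℓ ℓ' then Ypair (ωΛ ℓ) (ωΛ ℓ') else 0)
      ≤ ∑ ℓ : Torus d L, ∑ ℓ' : Torus d L, (if isNN ℓ ℓ' then (Xf (ωΛ ℓ) + Xf (ωΛ ℓ')) / 2 else 0) := by
    apply Finset.sum_le_sum; intro ℓ _
    apply Finset.sum_le_sum; intro ℓ' _
    split
    · exact Ypair_le _ _
    · exact le_refl 0
  have := sum_pair hL (fun ℓ => Xf (ωΛ ℓ))
  rw [YLam]
  nlinarith [this, h1]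

open Classical in
lemma neg_YLam_le {d L : ℕ} (hL : 2 ≤ L) [NeZero (2 * L)] (ωΛ : Torus d L → PathSpace) :
    -((d : ℝ) * ∑ ℓ : Torus d L, Xf (ωΛ ℓ)) ≤ YLam d L ωΛ := by
  have h1 : ∑ ℓ : Torus d L, ∑ ℓ' : Torus d L, (if isNN ℓ ℓ' then -((Xf (ωΛ ℓ) + Xf (ωΛ ℓ')) / 2) else 0)
      ≤ ∑ ℓ : Torus d L, ∑ ℓ' : Torus d L, (if isNN ℓ ℓ' then Ypair (ωΛ ℓ) (ωΛ ℓ') else 0) := by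
    apply Finset.sum_le_sum; intro ℓ _
    apply Finset.sum_le_sum; intro ℓ' _
    split
    · exact neg_Ypair_le _ _
    · exact le_refl 0
  have hneg : ∀ ℓ ℓ' : Torus d L, (if isNN ℓ ℓ' then -((Xf (ωΛ ℓ) + Xf (ωΛ ℓ')) / 2) else 0)
      = -(if isNN ℓ ℓ' then (Xf (ωΛ ℓ) + Xf (ωΛ ℓ')) / 2 else 0) := by
    intro ℓ ℓ'; split <;> simp
  simp_rw [hneg, Finset.sum_neg_distrib] at h1
  have := sum_pair hL (fun ℓ => Xf (ωΛ ℓ))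
  rw [YLam]
  nlinarith [this, h1]

open Classical in
lemma YLam_ge {d L : ℕ} (hL : 2 ≤ L) [NeZero (2 * L)] {ε : ℝ} (hε : 0 < ε)
    (ωΛ : Torus d L → PathSpace) (hpos : ∀ ℓ : Torus d L, ∀ τ, Real.sqrt ε ≤ (ωΛ ℓ).1 τ) :
    (((2 * L) ^ d : ℕ) : ℝ) * d * ε ≤ YLam d L ωΛ := by
  have h1 : ∑ ℓ : Torus d L, ∑ ℓ' : Torus d L, (if isNN ℓ ℓ' then ε else 0)
      ≤ ∑ ℓ : Torus d L, ∑ ℓ' : Torus d L, (if isNN ℓ ℓ' then Ypair (ωΛ ℓ) (ωΛ ℓ') else 0) := by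
    apply Finset.sum_le_sum; intro ℓ _
    apply Finset.sum_le_sum; intro ℓ' _
    split
    · exact Ypair_ge hε _ _ (hpos ℓ) (hpos ℓ')
    · exact le_refl 0
  have h2 : ∑ ℓ : Torus d L, ∑ ℓ' : Torus d L, (if isNN ℓ ℓ' then ε else 0)
      = (((2 * L) ^ d : ℕ) : ℝ) * (2 * (d : ℝ) * ε) := by
    simp_rw [sum_ite_const hL]
    rw [Finset.sum_const, Finset.card_univ, nsmul_eq_mul]
    have hcard : Fintype.card (Torus d L) = (2 * L) ^ d := by
      rw [Fintype.card_pi]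
      simp [ZMod.card]
    rw [hcard]
  rw [YLam]
  nlinarith [h1, h2]

open Classical in
lemma continuous_YLam (d L : ℕ) [NeZero (2 * L)] : Continuous (YLam d L) := by
  unfold YLam
  have h : ∀ ℓ ℓ' : Torus d L, Continuous fun ωΛ : Torus d L → PathSpace =>
      (if isNN ℓ ℓ' then Ypair (ωΛ ℓ) (ωΛ ℓ') else 0) := by
    intro ℓ ℓ'
    by_cases h : isNN ℓ ℓ'
    · simp only [if_pos h]
      exact continuous_Ypair.comp₂ (continuous_apply ℓ) (continuous_apply ℓ')
    · simp only [if_neg h]; exact continuous_const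
  exact continuous_const.mul
    (continuous_finset_sum _ fun ℓ _ => continuous_finset_sum _ fun ℓ' _ => h ℓ ℓ')

lemma card_torus (d L : ℕ) [NeZero (2 * L)] : Fintype.card (Torus d L) = (2 * L) ^ d := by
  rw [Fintype.card_pi]; simp [ZMod.card]

/-- The partition function `Z(J) = ∫ exp(J Y_Λ) dν^{⊗Λ}`. -/
def Zfun (d L : ℕ) [NeZero (2 * L)] (ν : Measure PathSpace) (J : ℝ) : ℝ :=
  ∫ ωΛ : Torus d L → PathSpace, Real.exp (J * YLam d L ωΛ) ∂(Measure.pi fun _ => ν)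

/-- The Gibbs probability measure `μ_J = Z(J)⁻¹ exp(J Y_Λ) ν^{⊗Λ}`. -/
def gibbs (d L : ℕ) [NeZero (2 * L)] (ν : Measure PathSpace) (J : ℝ) :
    Measure (Torus d L → PathSpace) :=
  (Measure.pi fun _ => ν).withDensity
    (fun ωΛ => ENNReal.ofReal (Real.exp (J * YLam d L ωΛ) / Zfun d L ν J))

/-- The crucial lower estimate (c5) of the paper: combining Lemmas 1 and 2, the mean
squared displacement under the periodic Euclidean Gibbs measure is at least `ε - δ/J`. -/
theorem crucial_estimate (d L : ℕ) (hd : 1 ≤ d) (hL : 2 ≤ L) [NeZero (2 * L)]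
    (ε δ J : ℝ) (hε : 0 < ε) (hδ : 0 ≤ δ) (hJ : 0 < J)
    (ν : Measure PathSpace) (hν : IsProbabilityMeasure ν)
    (hexp : ∀ t : ℝ, 0 < t →
      Integrable (fun ω : PathSpace => Real.exp (t * ∫ τ : unitInterval, (ω.1 τ) ^ 2)) ν)
    (B : Set PathSpace) (hBm : MeasurableSet B)
    (hνB : ENNReal.ofReal (Real.exp (-δ)) ≤ ν B)
    (hBpos : ∀ ω ∈ B, ∀ τ : unitInterval, Real.sqrt ε ≤ ω.1 τ) :
    ε - δ / J
      ≤ (1 / (((2 * L) ^ d : ℕ) : ℝ)) * ∑ ℓ : Torus d L,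
          ∫ ωΛ : Torus d L → PathSpace,
            (∫ τ : unitInterval, ((ωΛ ℓ).1 τ) ^ 2) ∂(gibbs d L ν J) := by
  -- notation
  set m : Measure (Torus d L → PathSpace) := Measure.pi fun _ => ν with hm
  set G : (Torus d L → PathSpace) → ℝ := fun ωΛ => Real.exp (J * YLam d L ωΛ) with hGdef
  set S : (Torus d L → PathSpace) → ℝ := fun ωΛ => ∑ ℓ : Torus d L, Xf (ωΛ ℓ) with hSdef
  set N : ℕ := (2 * L) ^ d with hN
  set Nr : ℝ := (N : ℝ) with hNrdef
  have hNr : (0 : ℝ) < Nr := by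
    rw [hNrdef, hN]; positivity
  have hd1 : (1 : ℝ) ≤ (d : ℝ) := by exact_mod_cast hd
  haveI : SigmaFinite ν := inferInstance
  haveI : IsProbabilityMeasure m := by rw [hm]; infer_instance
  -- continuity and basic positivity facts
  have contY : Continuous (YLam d L) := continuous_YLam d L
  have contG : Continuous G := Real.continuous_exp.comp (continuous_const.mul contY)
  have contX : ∀ ℓ : Torus d L, Continuous fun ωΛ : Torus d L → PathSpace => Xf (ωΛ ℓ) :=
    fun ℓ => continuous_Xf.comp (continuous_apply ℓ)
  have contS : Continuous S := continuous_finset_sum _ fun ℓ _ => contX ℓ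
  have hG0 : ∀ x, 0 < G x := fun x => Real.exp_pos _
  have hS0 : ∀ x, 0 ≤ S x := fun x => Finset.sum_nonneg fun ℓ _ => Xf_nonneg _
  have hX0 : ∀ (ℓ : Torus d L) (x : Torus d L → PathSpace), 0 ≤ Xf (x ℓ) := fun ℓ x => Xf_nonneg _
  -- dominating function
  set t1 : ℝ := J * d + 1 with ht1def
  have ht1 : 0 < t1 := by positivity
  set D : (Torus d L → PathSpace) → ℝ := fun x => ∏ ℓ : Torus d L, Real.exp (t1 * Xf (x ℓ))
    with hDdef
  have hDeq : ∀ x, D x = Real.exp (t1 * S x) := by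
    intro x
    rw [hDdef, hSdef]
    rw [Finset.mul_sum, Real.exp_sum]
  have intD : Integrable D m := by
    letI : MeasureSpace PathSpace := ⟨ν⟩
    haveI : IsProbabilityMeasure (volume : Measure PathSpace) := hν
    exact Integrable.fintype_prod (f := fun _ : Torus d L => fun ω : PathSpace =>
      Real.exp (t1 * Xf ω)) (fun ℓ => hexp t1 ht1)
  -- pointwise domination
  have hGS : ∀ x, G x ≤ Real.exp (J * (d * S x)) := by
    intro x
    apply Real.exp_le_exp.mpr
    exact mul_le_mul_of_nonneg_left (YLam_le hL x) hJ.le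
  have hGD : ∀ x, G x ≤ D x := by
    intro x
    rw [hDeq]
    refine (hGS x).trans (Real.exp_le_exp.mpr ?_)
    rw [ht1def]
    nlinarith [hS0 x]
  have hXGD : ∀ (ℓ : Torus d L) x, Xf (x ℓ) * G x ≤ D x := by
    intro ℓ x
    rw [hDeq]
    have h1 : Xf (x ℓ) ≤ S x := Finset.single_le_sum (fun i _ => Xf_nonneg _) (Finset.mem_univ ℓ)
    have h2 : S x ≤ Real.exp (S x) := by nlinarith [Real.add_one_le_exp (S x)]
    have h3 : Xf (x ℓ) * G x ≤ Real.exp (S x) * Real.exp (J * (d * S x)) :=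
      mul_le_mul (h1.trans h2) (hGS x) (hG0 x).le (Real.exp_pos _).le
    refine h3.trans_eq ?_
    rw [← Real.exp_add, ht1def]
    ring_nf
  -- integrability
  have intG : Integrable G m := by
    refine intD.mono' contG.aestronglyMeasurable (Filter.Eventually.of_forall fun x => ?_)
    rw [Real.norm_eq_abs, abs_of_pos (hG0 x)]
    exact hGD x
  have intH : ∀ ℓ : Torus d L, Integrable (fun x => Xf (x ℓ) * G x) m := by
    intro ℓ
    refine intD.mono' ((contX ℓ).mul contG).aestronglyMeasurable
      (Filter.Eventually.of_forall fun x => ?_)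
    rw [Real.norm_eq_abs, abs_of_nonneg (mul_nonneg (hX0 ℓ x) (hG0 x).le)]
    exact hXGD ℓ x
  have eSG : (fun x => S x * G x) = fun x => ∑ ℓ : Torus d L, Xf (x ℓ) * G x := by
    funext x; rw [hSdef]; rw [Finset.sum_mul]
  have intSG : Integrable (fun x => S x * G x) m := by
    rw [eSG]
    exact integrable_finset_sum _ fun ℓ _ => intH ℓ
  have intYG : Integrable (fun x => YLam d L x * G x) m := by
    refine (intSG.const_mul (d : ℝ)).mono' (contY.mul contG).aestronglyMeasurable
      (Filter.Eventually.of_forall fun x => ?_)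
    rw [Real.norm_eq_abs, abs_mul, abs_of_pos (hG0 x)]
    have h1 : |YLam d L x| ≤ (d : ℝ) * S x := abs_le.mpr ⟨neg_YLam_le hL x, YLam_le hL x⟩
    calc |YLam d L x| * G x ≤ ((d : ℝ) * S x) * G x :=
          mul_le_mul_of_nonneg_right h1 (hG0 x).le
      _ = (d : ℝ) * (S x * G x) := by ring
  -- partition function
  set Z : ℝ := Zfun d L ν J with hZdef
  have hZint : Z = ∫ x, G x ∂m := rfl
  set a : ℝ := Nr * d * ε - Nr * δ / J with hadef
  -- lower bound on Z
  set A : Set (Torus d L → PathSpace) := Set.pi Set.univ fun _ => B with hAdef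
  have hAm : MeasurableSet A := MeasurableSet.univ_pi fun _ => hBm
  have hmA : Real.exp (-δ) ^ N ≤ (m A).toReal := by
    have hBfin : ν B ≠ ⊤ := measure_ne_top ν B
    have h1 : Real.exp (-δ) ≤ (ν B).toReal := by
      have := ENNReal.toReal_mono hBfin hνB
      rwa [ENNReal.toReal_ofReal (Real.exp_pos _).le] at this
    have h2 : m A = ν B ^ N := by
      rw [hm, hAdef, Measure.pi_pi, Finset.prod_const, Finset.card_univ, card_torus, hN]
    rw [h2, ENNReal.toReal_pow]
    exact pow_le_pow_left₀ (Real.exp_pos _).le h1 N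
  have hZge : Real.exp (J * a) ≤ Z := by
    have hJa : J * a = J * (Nr * d * ε) + (N : ℝ) * (-δ) := by
      rw [hadef]; field_simp; ring
    have step1 : Real.exp (J * a) ≤ Real.exp (J * (Nr * d * ε)) * (m A).toReal := by
      rw [hJa, Real.exp_add, Real.exp_nat_mul]
      exact mul_le_mul_of_nonneg_left hmA (Real.exp_pos _).le
    have step2 : Real.exp (J * (Nr * d * ε)) * (m A).toReal ≤ ∫ x in A, G x ∂m := by
      apply setIntegral_ge_of_const_le_real hAm (measure_ne_top m A) _ intG.integrableOn
      intro x hx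
      apply Real.exp_le_exp.mpr
      apply mul_le_mul_of_nonneg_left _ hJ.le
      rw [hNrdef, hN]
      exact YLam_ge hL hε x fun ℓ τ => hBpos _ (hx ℓ trivial) τ
    have step3 : ∫ x in A, G x ∂m ≤ Z := by
      rw [hZint]
      exact setIntegral_le_integral intG (Filter.Eventually.of_forall fun x => (hG0 x).le)
    linarith
  have hZpos : 0 < Z := lt_of_lt_of_le (Real.exp_pos _) hZge
  -- key pointwise inequality
  have hkey : ∀ x, a * G x + (G x - Real.exp (J * a)) / J ≤ YLam d L x * G x := by
    intro x
    set y : ℝ := YLam d L x with hy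
    have hGx : G x = Real.exp (J * y) := rfl
    have h1 : Real.exp (J * (a - y)) * Real.exp (J * y) = Real.exp (J * a) := by
      rw [← Real.exp_add]; ring_nf
    have h2 : J * (a - y) + 1 ≤ Real.exp (J * (a - y)) := Real.add_one_le_exp _
    have h3 : (0 : ℝ) < Real.exp (J * y) := Real.exp_pos _
    have key : G x - Real.exp (J * a) ≤ J * (y - a) * G x := by
      rw [hGx]
      nlinarith [h1, h2, h3]
    have h4 : (G x - Real.exp (J * a)) / J ≤ (y - a) * G x := by
      rw [div_le_iff₀ hJ]
      nlinarith [key]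
    nlinarith [h4]
  -- integrate the key inequality
  have hYGa : a * Z ≤ ∫ x, YLam d L x * G x ∂m := by
    have int1 : Integrable (fun x => a * G x) m := intG.const_mul a
    have int2 : Integrable (fun x => G x - Real.exp (J * a)) m := intG.sub (integrable_const _)
    have int3 : Integrable (fun x => (G x - Real.exp (J * a)) / J) m := int2.div_const J
    have hlhs : ∫ x, (a * G x + (G x - Real.exp (J * a)) / J) ∂m
        = a * Z + (Z - Real.exp (J * a)) / J := by
      rw [integral_add int1 int3, integral_const_mul, integral_div,
        integral_sub intG (integrable_const _), integral_const, hZint]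
      simp [measure_univ]
    have hmono : ∫ x, (a * G x + (G x - Real.exp (J * a)) / J) ∂m
        ≤ ∫ x, YLam d L x * G x ∂m :=
      integral_mono (int1.add int3) intYG hkey
    rw [hlhs] at hmono
    have hnn : 0 ≤ (Z - Real.exp (J * a)) / J := div_nonneg (by linarith) hJ.le
    calc a * Z ≤ a * Z + (Z - Real.exp (J * a)) / J := le_add_of_nonneg_right hnn
      _ ≤ ∫ x, YLam d L x * G x ∂m := hmono
  -- compare with S
  have hYS : ∫ x, YLam d L x * G x ∂m ≤ (d : ℝ) * ∫ x, S x * G x ∂m := by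
    rw [← integral_const_mul]
    apply integral_mono intYG (intSG.const_mul _)
    intro x
    have h1 : YLam d L x ≤ (d : ℝ) * S x := YLam_le hL x
    calc YLam d L x * G x ≤ ((d : ℝ) * S x) * G x :=
          mul_le_mul_of_nonneg_right h1 (hG0 x).le
      _ = (d : ℝ) * (S x * G x) := by ring
  -- compute the Gibbs integrals
  have hgibbs : ∀ ℓ : Torus d L, (∫ x, Xf (x ℓ) ∂(gibbs d L ν J))
      = Z⁻¹ * ∫ x, Xf (x ℓ) * G x ∂m := by
    intro ℓ
    have hfm : Measurable fun x : Torus d L → PathSpace => Real.toNNReal (G x / Z) :=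
      (contG.measurable.div_const Z).real_toNNReal
    have e1 : gibbs d L ν J = m.withDensity fun x => ((G x / Z).toNNReal : ℝ≥0∞) := rfl
    rw [e1, integral_withDensity_eq_integral_smul hfm]
    have e2 : ∀ x, Real.toNNReal (G x / Z) • Xf (x ℓ) = Z⁻¹ * (Xf (x ℓ) * G x) := by
      intro x
      rw [NNReal.smul_def, smul_eq_mul, Real.coe_toNNReal _ (div_nonneg (hG0 x).le hZpos.le)]
      ring
    simp_rw [e2]
    rw [integral_const_mul]
  -- put everything together
  have hsum : ∑ ℓ : Torus d L, (∫ x, Xf (x ℓ) ∂(gibbs d L ν J))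
      = Z⁻¹ * ∫ x, S x * G x ∂m := by
    simp_rw [hgibbs]
    rw [← Finset.mul_sum, ← integral_finset_sum _ fun ℓ _ => intH ℓ, ← eSG]
  have hfinal : Nr * (ε - δ / J) ≤ Z⁻¹ * ∫ x, S x * G x ∂m := by
    have i1 : 0 ≤ Z⁻¹ := inv_nonneg.mpr hZpos.le
    have i2 : a * Z ≤ (d : ℝ) * ∫ x, S x * G x ∂m := hYGa.trans hYS
    have h5 : a ≤ (d : ℝ) * (Z⁻¹ * ∫ x, S x * G x ∂m) := by
      calc a = a * Z * Z⁻¹ := by rw [mul_assoc, mul_inv_cancel₀ hZpos.ne', mul_one]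
        _ ≤ ((d : ℝ) * ∫ x, S x * G x ∂m) * Z⁻¹ := mul_le_mul_of_nonneg_right i2 i1
        _ = (d : ℝ) * (Z⁻¹ * ∫ x, S x * G x ∂m) := by ring
    have h6 : Nr * (ε - δ / J) * (d : ℝ) ≤ a := by
      rw [hadef]
      have hq : 0 ≤ Nr * δ / J := div_nonneg (mul_nonneg hNr.le hδ) hJ.le
      have expand : Nr * (ε - δ / J) * (d : ℝ) = Nr * (d : ℝ) * ε - (Nr * δ / J) * (d : ℝ) := by
        ring
      have hmono2 : Nr * δ / J ≤ (Nr * δ / J) * (d : ℝ) := le_mul_of_one_le_right hq hd1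
      rw [expand]
      have : Nr * ((d : ℝ)) * ε = Nr * (d : ℝ) * ε := rfl
      linarith
    have hdpos : (0 : ℝ) < (d : ℝ) := lt_of_lt_of_le one_pos hd1
    have h7 : Nr * (ε - δ / J) * (d : ℝ) ≤ (Z⁻¹ * ∫ x, S x * G x ∂m) * (d : ℝ) := by
      calc Nr * (ε - δ / J) * (d : ℝ) ≤ a := h6
        _ ≤ (d : ℝ) * (Z⁻¹ * ∫ x, S x * G x ∂m) := h5
        _ = (Z⁻¹ * ∫ x, S x * G x ∂m) * (d : ℝ) := by ring
    exact le_of_mul_le_mul_right h7 hdpos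
  have hgoal : ∑ ℓ : Torus d L, (∫ x, Xf (x ℓ) ∂(gibbs d L ν J)) ≥ Nr * (ε - δ / J) := by
    rw [hsum]; exact hfinal
  calc ε - δ / J = (1 / Nr) * (Nr * (ε - δ / J)) := by field_simp
    _ ≤ (1 / Nr) * ∑ ℓ : Torus d L, (∫ x, Xf (x ℓ) ∂(gibbs d L ν J)) :=
        mul_le_mul_of_nonneg_left hgoal (by positivity)
    _ = _ := by rw [hNrdef, hN]; rfl
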